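/- arXiv:1511.00531 — 2 statements merged into one kernel-verified Lean document; each statement's English description precedes it below -/
import Mathlib

section
/- (Detection of Werner states.) Fix γ ∈ (0,1/2] and F ∈ [0,1], and let φ_F = F·|Ψ⁺⟩⟨Ψ⁺| + (1−F)·I₄/4 be a two-qubit Werner state. With Q₀ = R₀ = 2γ|Ψ⁺⟩⟨Ψ⁺|, Q₁ = R₁ = 2γ|Ψ⁻⟩⟨Ψ⁻|, define M_{a,b}[(i,k),(j,l)] = Σ_{i',k',i'',k''} Q_a[(i,i'),(j,i'')]·R_b[(k,k'),(l,k'')]·φ_F[(i'',k''),(i',k')], and set Π₀ = M_{0,0}+M_{1,1}, Π₁ = M_{0,1}+M_{1,0}, Π_∅ = I₄−Π₀−Π₁. Then (Π₀,Π₁,Π_∅) is a γ-admissible triple whose normalized guessing probability equals V/γ² = 1/2 + F/(2√2); in particular it exceeds the PPT bound 1/2 + 1/(4√2) if and only if F > 1/2. -/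
open Matrix Complex Kronecker BigOperators ComplexOrder

noncomputable section

abbrev Mat2 := Matrix (Fin 2) (Fin 2) ℂ
abbrev Mat4 := Matrix (Fin 2 × Fin 2) (Fin 2 × Fin 2) ℂ

/-- Pauli X matrix -/
def PX : Mat2 := !![0, 1; 1, 0]

/-- Pauli Y matrix -/
def PY : Mat2 := !![0, -Complex.I; Complex.I, 0]

/-- sign (−1)^b for a bit b -/
def bsign (b : Bool) : ℂ := if b then -1 else 1

/-- boolean function f(x̄,ȳ) = (x₁·y₁) XOR x₂ XOR y₂ -/
def fxy (x y : Bool × Bool) : Bool := (((x.1 && y.1)).xor x.2).xor y.2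

/-- qubit input states ω_{x̄}: ω_{(0,x₂)} = (I+(−1)^{x₂}X)/2, ω_{(1,x₂)} = (I+(−1)^{x₂}Y)/2 -/
def omg (x : Bool × Bool) : Mat2 :=
  (1/2 : ℂ) • ((1 : Mat2) + bsign x.2 • (if x.1 then PY else PX))

/-- qubit input states τ_{ȳ} = (I+(−1)^{y₂}(X+(−1)^{y₁}Y)/√2)/2 -/
def tau (y : Bool × Bool) : Mat2 :=
  (1/2 : ℂ) • ((1 : Mat2) + (bsign y.2 / (Real.sqrt 2 : ℂ)) • (PX + bsign y.1 • PY))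

/-- averaged input states ρ₀ (for c = false) and ρ₁ (for c = true) -/
def rho (c : Bool) : Mat4 :=
  (1/8 : ℂ) • ∑ x : Bool × Bool, ∑ y : Bool × Bool,
    (if fxy x y = c then omg x ⊗ₖ tau y else 0)

/-- standard basis vectors of ℂ⁴ ≅ ℂ² ⊗ ℂ² -/
def ket (i j : Fin 2) : (Fin 2 × Fin 2) → ℂ := fun p => if p = (i, j) then 1 else 0

def PhiP : (Fin 2 × Fin 2) → ℂ := fun p => (1 / (Real.sqrt 2 : ℂ)) * (ket 0 0 p + ket 1 1 p)
def PhiM : (Fin 2 × Fin 2) → ℂ := fun p => (1 / (Real.sqrt 2 : ℂ)) * (ket 0 0 p - ket 1 1 p)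
def PsiP : (Fin 2 × Fin 2) → ℂ := fun p => (1 / (Real.sqrt 2 : ℂ)) * (ket 0 1 p + ket 1 0 p)
def PsiM : (Fin 2 × Fin 2) → ℂ := fun p => (1 / (Real.sqrt 2 : ℂ)) * (ket 0 1 p - ket 1 0 p)

/-- rank one projector |v⟩⟨v| -/
def proj (v : (Fin 2 × Fin 2) → ℂ) : Mat4 := Matrix.vecMulVec v (star v)

/-- a γ-admissible measurement triple -/
def Admissible (γ : ℝ) (P0 P1 Pe : Mat4) : Prop :=
  P0.PosSemidef ∧ P1.PosSemidef ∧ Pe.PosSemidef ∧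
  P0 + P1 + Pe = 1 ∧
  ∀ x y : Bool × Bool, ((omg x ⊗ₖ tau y) * Pe).trace = 1 - (γ : ℂ)^2

/-- guessing value V = (1/2)·Tr[ρ₀Π₀ + ρ₁Π₁] (a real number) -/
def Gval (P0 P1 : Mat4) : ℝ := (1/2) * ((rho false * P0 + rho true * P1).trace).re

/-- effective two-qubit operator: partial trace over the target systems of
    (Q_a ⊗ R_b)(I_A ⊗ φ_{A'B'} ⊗ I_B) -/
def effM (Q R phi : Mat4) : Mat4 := Matrix.of fun p q =>
  ∑ i' : Fin 2, ∑ k' : Fin 2, ∑ i'' : Fin 2, ∑ k'' : Fin 2,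
    Q (p.1, i') (q.1, i'') * R (p.2, k') (q.2, k'') * phi (i'', k'') (i', k')

/-- two-qubit Werner state F·|Ψ⁺⟩⟨Ψ⁺| + (1−F)·I/4 -/
def werner (F : ℝ) : Mat4 := (F : ℂ) • proj PsiP + (((1 - F)/4 : ℝ) : ℂ) • 1


lemma proj_psd (v : (Fin 2 × Fin 2) → ℂ) : (proj v).PosSemidef := by
  have : proj v = Matrix.replicateCol Unit v * (Matrix.replicateCol Unit v)ᴴ := by
    rw [Matrix.conjTranspose_replicateCol, proj, Matrix.vecMulVec_eq Unit]
  rw [this]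
  exact Matrix.posSemidef_self_mul_conjTranspose _

lemma psd_smul {M : Mat4} (hM : M.PosSemidef) {c : ℝ} (hc : 0 ≤ c) :
    ((c : ℂ) • M).PosSemidef := by
  constructor
  · show _ = _
    rw [Matrix.conjTranspose_smul, hM.1]
    norm_num [Complex.star_def, Complex.conj_ofReal]
  · intro x
    have h := mul_nonneg (show (0:ℂ) ≤ (c:ℂ) by exact_mod_cast hc) (hM.2 x)
    simp only [Finsupp.sum, Finset.mul_sum, Matrix.smul_apply, smul_eq_mul] at h ⊢
    convert h using 1
    exact Finset.sum_congr rfl fun i _ => Finset.sum_congr rfl fun j _ => by ring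

lemma sqrt2C : ((Real.sqrt 2 : ℝ) : ℂ) * ((Real.sqrt 2 : ℝ) : ℂ) = 2 := by
  rw [← Complex.ofReal_mul, Real.mul_self_sqrt (by norm_num)]
  norm_num

lemma sqrt2C_ne : ((Real.sqrt 2 : ℝ) : ℂ) ≠ 0 := by
  simp [Real.sqrt_eq_zero']
def sgP : Fin 2 × Fin 2 → ℂ := fun p => if p.1 = p.2 then 0 else 1
def sgM : Fin 2 × Fin 2 → ℂ := fun p => if p = (0,1) then 1 else if p = (1,0) then -1 else 0

lemma PsiP_eq : PsiP = fun p => sgP p / ((Real.sqrt 2 : ℝ) : ℂ) := by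
  funext p
  fin_cases p <;> norm_num [PsiP, ket, sgP, Prod.ext_iff]

lemma PsiM_eq : PsiM = fun p => sgM p / ((Real.sqrt 2 : ℝ) : ℂ) := by
  funext p
  fin_cases p <;> norm_num [PsiM, ket, sgM, Prod.ext_iff] <;> ring

lemma projPsiP_apply (p q : Fin 2 × Fin 2) : proj PsiP p q = sgP p * sgP q / 2 := by
  simp only [proj, Matrix.vecMulVec_apply, Pi.star_apply, PsiP_eq, sgP, star_div₀,
    star_one, star_zero, Complex.star_def, Complex.conj_ofReal]
  split_ifs <;> simp only [map_one, map_zero, map_neg] <;> field_simp [sqrt2C] <;>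
    simp [← sq, ← Complex.ofReal_pow]

lemma projPsiM_apply (p q : Fin 2 × Fin 2) : proj PsiM p q = sgM p * sgM q / 2 := by
  simp only [proj, Matrix.vecMulVec_apply, Pi.star_apply, PsiM_eq, sgM, star_div₀,
    star_one, star_zero, star_neg, Complex.star_def, Complex.conj_ofReal]
  split_ifs <;> simp only [map_one, map_zero, map_neg] <;> field_simp [sqrt2C] <;>
    simp [← sq, ← Complex.ofReal_pow]

lemma projket_apply (i j : Fin 2) (p q : Fin 2 × Fin 2) :
    proj (ket i j) p q = if p = (i,j) ∧ q = (i,j) then 1 else 0 := by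
  simp only [proj, Matrix.vecMulVec_apply, Pi.star_apply, ket, star_one, star_zero]
  split_ifs <;> simp_all

def m0 (γ F : ℝ) : Mat4 := Matrix.of fun p q =>
  if p = q then (if p.1 = p.2 then ((γ^2*(1-F)/2 : ℝ) : ℂ) else ((γ^2*(1+F)/2 : ℝ) : ℂ))
  else if p.1 ≠ p.2 ∧ q.1 ≠ q.2 then ((γ^2*F : ℝ) : ℂ) else 0

def m1 (γ F : ℝ) : Mat4 := Matrix.of fun p q =>
  if p = q then (if p.1 = p.2 then ((γ^2*(1-F)/2 : ℝ) : ℂ) else ((γ^2*(1+F)/2 : ℝ) : ℂ))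
  else if p.1 ≠ p.2 ∧ q.1 ≠ q.2 then ((-(γ^2*F) : ℝ) : ℂ) else 0

set_option maxHeartbeats 1000000 in
lemma key0 (γ F : ℝ) :
    effM ((2*γ : ℝ) • proj PsiP) ((2*γ : ℝ) • proj PsiP) (werner F)
      + effM ((2*γ : ℝ) • proj PsiM) ((2*γ : ℝ) • proj PsiM) (werner F) = m0 γ F := by
  ext p q
  simp only [Matrix.add_apply, effM, Matrix.of_apply, Matrix.smul_apply, werner,
    projPsiP_apply, projPsiM_apply, Matrix.one_apply, Fin.sum_univ_two, sgP, sgM, m0,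
    smul_eq_mul, Complex.real_smul]
  fin_cases p <;> fin_cases q <;>
    norm_num [Prod.ext_iff] <;> push_cast <;> ring

set_option maxHeartbeats 1000000 in
lemma key1 (γ F : ℝ) :
    effM ((2*γ : ℝ) • proj PsiP) ((2*γ : ℝ) • proj PsiM) (werner F)
      + effM ((2*γ : ℝ) • proj PsiM) ((2*γ : ℝ) • proj PsiP) (werner F) = m1 γ F := by
  ext p q
  simp only [Matrix.add_apply, effM, Matrix.of_apply, Matrix.smul_apply, werner,
    projPsiP_apply, projPsiM_apply, Matrix.one_apply, Fin.sum_univ_two, sgP, sgM, m1,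
    smul_eq_mul, Complex.real_smul]
  fin_cases p <;> fin_cases q <;>
    norm_num [Prod.ext_iff] <;> push_cast <;> ring

def dE (γ F : ℝ) : (Fin 2 × Fin 2) → ℂ :=
  fun p => ((1 - γ^2 * (if p.1 = p.2 then 1-F else 1+F) : ℝ) : ℂ)

lemma keyE (γ F : ℝ) : (1 : Mat4) - m0 γ F - m1 γ F = Matrix.diagonal (dE γ F) := by
  ext p q
  simp only [Matrix.sub_apply, Matrix.one_apply, m0, m1, Matrix.of_apply,
    Matrix.diagonal_apply, dE]
  split_ifs <;> push_cast <;> ring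

lemma m0_decomp (γ F : ℝ) :
    m0 γ F = ((γ^2*(1+3*F)/2 : ℝ) : ℂ) • proj PsiP
      + ((γ^2*(1-F)/2 : ℝ) : ℂ) • (proj PsiM + proj (ket 0 0) + proj (ket 1 1)) := by
  ext p q
  simp only [m0, Matrix.of_apply, Matrix.add_apply, Matrix.smul_apply,
    projPsiP_apply, projPsiM_apply, projket_apply, sgP, sgM, smul_eq_mul]
  fin_cases p <;> fin_cases q <;> norm_num [Prod.ext_iff] <;> push_cast <;> ring

lemma m1_decomp (γ F : ℝ) :
    m1 γ F = ((γ^2*(1+3*F)/2 : ℝ) : ℂ) • proj PsiM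
      + ((γ^2*(1-F)/2 : ℝ) : ℂ) • (proj PsiP + proj (ket 0 0) + proj (ket 1 1)) := by
  ext p q
  simp only [m1, Matrix.of_apply, Matrix.add_apply, Matrix.smul_apply,
    projPsiP_apply, projPsiM_apply, projket_apply, sgP, sgM, smul_eq_mul]
  fin_cases p <;> fin_cases q <;> norm_num [Prod.ext_iff] <;> push_cast <;> ring

lemma m0_psd (γ F : ℝ) (hF : 0 ≤ F) (hF' : F ≤ 1) : (m0 γ F).PosSemidef := by
  rw [m0_decomp]
  exact (psd_smul (proj_psd _) (by nlinarith [sq_nonneg γ])).add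
    (psd_smul (((proj_psd _).add (proj_psd _)).add (proj_psd _)) (by nlinarith [sq_nonneg γ]))

lemma m1_psd (γ F : ℝ) (hF : 0 ≤ F) (hF' : F ≤ 1) : (m1 γ F).PosSemidef := by
  rw [m1_decomp]
  exact (psd_smul (proj_psd _) (by nlinarith [sq_nonneg γ])).add
    (psd_smul (((proj_psd _).add (proj_psd _)).add (proj_psd _)) (by nlinarith [sq_nonneg γ]))

lemma dE_psd (γ F : ℝ) (hγ : 0 < γ) (hγ' : γ ≤ 1/2) (hF : 0 ≤ F) (hF' : F ≤ 1) :
    (Matrix.diagonal (dE γ F)).PosSemidef := by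
  refine Matrix.posSemidef_diagonal_iff.mpr fun p => ?_
  rw [dE, Complex.zero_le_real]
  split_ifs <;> nlinarith

set_option maxHeartbeats 1000000 in
lemma traceE (γ F : ℝ) (x y : Bool × Bool) :
    ((omg x ⊗ₖ tau y) * Matrix.diagonal (dE γ F)).trace = 1 - (γ : ℂ)^2 := by
  rcases x with ⟨x1, x2⟩; rcases y with ⟨y1, y2⟩
  cases x1 <;> cases x2 <;> cases y1 <;> cases y2 <;>
  · simp only [Matrix.trace, Matrix.diag_apply, Matrix.mul_apply, Matrix.diagonal_apply,
      Matrix.kroneckerMap_apply, omg, tau, bsign, PX, PY, dE, Matrix.smul_apply,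
      Matrix.add_apply, Matrix.one_apply, Fintype.sum_prod_type, Fin.sum_univ_two,
      smul_eq_mul, if_true, if_false, Bool.false_eq_true]
    norm_num [Prod.ext_iff]
    push_cast
    ring

set_option maxHeartbeats 2000000 in
lemma rho_eq (c : Bool) : rho c = Matrix.of fun p q =>
    if p = q then (1/4 : ℂ)
    else if p.1 ≠ p.2 ∧ q.1 ≠ q.2 then bsign c / (4 * ((Real.sqrt 2 : ℝ) : ℂ)) else 0 := by
  cases c <;>
  · ext p q
    simp only [rho, Matrix.smul_apply, Matrix.sum_apply, Matrix.of_apply,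
      Fintype.sum_prod_type, Fintype.sum_bool, fxy, Bool.xor, Matrix.kroneckerMap_apply,
      omg, tau, bsign, PX, PY, Matrix.add_apply, Matrix.one_apply, smul_eq_mul,
      Matrix.zero_apply, ite_apply]
    fin_cases p <;> fin_cases q <;>
      norm_num [Prod.ext_iff] <;>
      field_simp [sqrt2C] <;>
      ring_nf <;>
      simp [Complex.I_sq] <;>
      ring_nf <;> simp [sqrt2C_ne] <;> ring

set_option maxHeartbeats 2000000 in
lemma gtrace (γ F : ℝ) :
    (rho false * m0 γ F + rho true * m1 γ F).trace
      = ((γ^2 * (1 + F / Real.sqrt 2) : ℝ) : ℂ) := by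
  simp only [rho_eq, m0, m1, Matrix.trace, Matrix.diag_apply, Matrix.add_apply,
    Matrix.mul_apply, Matrix.of_apply, Fintype.sum_prod_type, Fin.sum_univ_two, bsign,
    if_true, if_false, Bool.false_eq_true]
  norm_num [Prod.ext_iff]
  field_simp [sqrt2C]
  ring

lemma gval (γ F : ℝ) (hγ : γ ≠ 0) :
    Gval (m0 γ F) (m1 γ F) / γ^2 = 1/2 + F/(2*Real.sqrt 2) := by
  have hs : (0:ℝ) < Real.sqrt 2 := Real.sqrt_pos.mpr (by norm_num)
  rw [Gval, gtrace, Complex.ofReal_re]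
  field_simp

/-- detection of Werner states. -/
theorem werner_detection (γ : ℝ) (hγ : 0 < γ) (hγ' : γ ≤ 1/2) (F : ℝ)
    (hF : 0 ≤ F) (hF' : F ≤ 1) :
    Admissible γ
      (effM ((2*γ : ℝ) • proj PsiP) ((2*γ : ℝ) • proj PsiP) (werner F)
        + effM ((2*γ : ℝ) • proj PsiM) ((2*γ : ℝ) • proj PsiM) (werner F))
      (effM ((2*γ : ℝ) • proj PsiP) ((2*γ : ℝ) • proj PsiM) (werner F)
        + effM ((2*γ : ℝ) • proj PsiM) ((2*γ : ℝ) • proj PsiP) (werner F))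
      (1 - (effM ((2*γ : ℝ) • proj PsiP) ((2*γ : ℝ) • proj PsiP) (werner F)
             + effM ((2*γ : ℝ) • proj PsiM) ((2*γ : ℝ) • proj PsiM) (werner F))
         - (effM ((2*γ : ℝ) • proj PsiP) ((2*γ : ℝ) • proj PsiM) (werner F)
             + effM ((2*γ : ℝ) • proj PsiM) ((2*γ : ℝ) • proj PsiP) (werner F))) ∧
    Gval (effM ((2*γ : ℝ) • proj PsiP) ((2*γ : ℝ) • proj PsiP) (werner F)
            + effM ((2*γ : ℝ) • proj PsiM) ((2*γ : ℝ) • proj PsiM) (werner F))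
         (effM ((2*γ : ℝ) • proj PsiP) ((2*γ : ℝ) • proj PsiM) (werner F)
            + effM ((2*γ : ℝ) • proj PsiM) ((2*γ : ℝ) • proj PsiP) (werner F)) / γ^2
      = 1/2 + F/(2*Real.sqrt 2) ∧
    (1/2 + 1/(4*Real.sqrt 2)
        < Gval (effM ((2*γ : ℝ) • proj PsiP) ((2*γ : ℝ) • proj PsiP) (werner F)
                  + effM ((2*γ : ℝ) • proj PsiM) ((2*γ : ℝ) • proj PsiM) (werner F))
               (effM ((2*γ : ℝ) • proj PsiP) ((2*γ : ℝ) • proj PsiM) (werner F)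
                  + effM ((2*γ : ℝ) • proj PsiM) ((2*γ : ℝ) • proj PsiP) (werner F)) / γ^2
      ↔ 1/2 < F) := by
  rw [key0 γ F, key1 γ F]
  have hs : (0:ℝ) < Real.sqrt 2 := Real.sqrt_pos.mpr (by norm_num)
  refine ⟨⟨m0_psd γ F hF hF', m1_psd γ F hF hF', ?_, by abel, fun x y => ?_⟩,
    gval γ F hγ.ne', ?_⟩
  · rw [keyE]; exact dE_psd γ F hγ hγ' hF hF'
  · rw [keyE]; exact traceE γ F x y
  · rw [gval γ F hγ.ne', add_lt_add_iff_left, div_lt_div_iff₀ (by positivity) (by positivity)]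
    constructor <;> intro h <;> nlinarith [hs]
end
end

section
/- (Tsirelson-type bound.) For every γ ∈ (0,1] and every γ-admissible triple (Π₀,Π₁,Π_∅), the normalized guessing probability satisfies V/γ² ≤ 1/2 + 1/(2√2); equivalently, the postselected Bell value S = 8·(V/γ² − 1/2) never exceeds 2√2. -/
open Matrix Complex Kronecker BigOperators ComplexOrder

noncomputable section

lemma trace_mul_nonneg {A B : Mat4} (hA : A.PosSemidef) (hB : B.PosSemidef) :
    0 ≤ (A * B).trace := by
  obtain ⟨C, rfl⟩ : ∃ C : Mat4, A = Cᴴ * C := by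
    open scoped MatrixOrder Matrix.Norms.L2Operator in
    exact CStarAlgebra.nonneg_iff_eq_star_mul_self.mp hA.nonneg
  obtain ⟨D, rfl⟩ : ∃ D : Mat4, B = Dᴴ * D := by
    open scoped MatrixOrder Matrix.Norms.L2Operator in
    exact CStarAlgebra.nonneg_iff_eq_star_mul_self.mp hB.nonneg
  have step : (Cᴴ * C * (Dᴴ * D)).trace = ((C * Dᴴ)ᴴ * (C * Dᴴ)).trace := by
    calc (Cᴴ * C * (Dᴴ * D)).trace = ((Cᴴ * C * Dᴴ) * D).trace := by noncomm_ring
      _ = (D * (Cᴴ * C * Dᴴ)).trace := Matrix.trace_mul_comm _ _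
      _ = ((C * Dᴴ)ᴴ * (C * Dᴴ)).trace := by
          rw [Matrix.conjTranspose_mul, Matrix.conjTranspose_conjTranspose]
          simp [Matrix.mul_assoc]
  rw [step, Matrix.trace]
  apply Finset.sum_nonneg
  intro i _
  simp only [Matrix.diag_apply, Matrix.mul_apply, Matrix.conjTranspose_apply]
  apply Finset.sum_nonneg
  intro j _
  exact star_mul_self_nonneg _

lemma neg_kron (A B : Mat2) : (-A) ⊗ₖ B = -(A ⊗ₖ B) := by
  ext ⟨i,j⟩ ⟨k,l⟩; simp [Matrix.kroneckerMap_apply]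

lemma kron_neg (A B : Mat2) : A ⊗ₖ (-B) = -(A ⊗ₖ B) := by
  ext ⟨i,j⟩ ⟨k,l⟩; simp [Matrix.kroneckerMap_apply]

lemma sum_kron : ∑ x : Bool × Bool, ∑ y : Bool × Bool, (omg x ⊗ₖ tau y) = (4:ℂ) • (1 : Mat4) := by
  simp [Fintype.sum_prod_type, Fintype.sum_bool, omg, tau, bsign,
    Matrix.smul_kronecker, Matrix.kronecker_smul, Matrix.add_kronecker,
    Matrix.kronecker_add, Matrix.one_kronecker_one, neg_kron, kron_neg]
  module

lemma rho_add : rho false + rho true = (1/2 : ℂ) • (1 : Mat4) := by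
  have e : rho false + rho true
      = (1/8 : ℂ) • ∑ x : Bool × Bool, ∑ y : Bool × Bool, (omg x ⊗ₖ tau y) := by
    simp only [rho, ← smul_add, ← Finset.sum_add_distrib]
    congr 1
    apply Finset.sum_congr rfl; intro x _
    apply Finset.sum_congr rfl; intro y _
    cases hxy : fxy x y <;> simp [hxy]
  rw [e, sum_kron, smul_smul]
  norm_num

lemma key_sum : ∑ x : Bool × Bool, ∑ y : Bool × Bool, bsign (fxy x y) • (omg x ⊗ₖ tau y)
    = ((2 : ℂ)/(Real.sqrt 2 : ℂ)) • (PX ⊗ₖ PX + PY ⊗ₖ PY) := by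
  simp [Fintype.sum_prod_type, Fintype.sum_bool, omg, tau, bsign, fxy,
    Matrix.smul_kronecker, Matrix.kronecker_smul, Matrix.add_kronecker,
    Matrix.kronecker_add, Matrix.one_kronecker_one, neg_kron, kron_neg]
  module

lemma rho_sub : rho false - rho true
    = (1/8 : ℂ) • (((2 : ℂ)/(Real.sqrt 2 : ℂ)) • (PX ⊗ₖ PX + PY ⊗ₖ PY)) := by
  rw [← key_sum]
  simp only [rho, ← smul_sub, ← Finset.sum_sub_distrib]
  congr 1
  apply Finset.sum_congr rfl; intro x _
  apply Finset.sum_congr rfl; intro y _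
  cases hxy : fxy x y <;> simp [hxy, bsign]

lemma sqrt2_mul_self : (Real.sqrt 2 : ℂ) * (Real.sqrt 2 : ℂ) = 2 := by
  norm_cast
  exact Real.mul_self_sqrt (by norm_num)

lemma sqrt2_ne : (Real.sqrt 2 : ℂ) ≠ 0 := by
  intro hc
  have := sqrt2_mul_self
  rw [hc] at this
  norm_num at this

lemma PXX_PYY : PX ⊗ₖ PX + PY ⊗ₖ PY = (2:ℂ) • (proj PsiP - proj PsiM) := by
  ext ⟨i,j⟩ ⟨k,l⟩
  fin_cases i <;> fin_cases j <;> fin_cases k <;> fin_cases l <;>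
    simp +decide [PX, PY, proj, Matrix.vecMulVec_apply, PsiP, PsiM, ket,
      Matrix.kroneckerMap_apply, Complex.ext_iff, Prod.ext_iff] <;>
    ring_nf <;> norm_num [Real.sq_sqrt]

lemma proj_sum : proj PhiP + proj PhiM + proj PsiP + proj PsiM = (1 : Mat4) := by
  ext ⟨i,j⟩ ⟨k,l⟩
  fin_cases i <;> fin_cases j <;> fin_cases k <;> fin_cases l <;>
    simp +decide [proj, Matrix.vecMulVec_apply, PhiP, PhiM, PsiP, PsiM, ket,
      Matrix.one_apply, Complex.ext_iff, Prod.ext_iff] <;>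
    ring_nf <;> norm_num [Real.sq_sqrt]

lemma one_sub_projPsiP : (1 : Mat4) - proj PsiP = proj PhiP + proj PhiM + proj PsiM := by
  rw [← proj_sum]; abel

lemma one_sub_projPsiM : (1 : Mat4) - proj PsiM = proj PhiP + proj PhiM + proj PsiP := by
  rw [← proj_sum]; abel

lemma trace_proj_le_left {P : Mat4} (hP : P.PosSemidef) :
    (proj PsiP * P).trace ≤ P.trace := by
  have hpos : ((1 : Mat4) - proj PsiP).PosSemidef := by
    rw [one_sub_projPsiP]
    exact ((proj_psd _).add (proj_psd _)).add (proj_psd _)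
  have h0 := trace_mul_nonneg hpos hP
  have : (((1 : Mat4) - proj PsiP) * P).trace = P.trace - (proj PsiP * P).trace := by
    simp [Matrix.sub_mul]
  rw [this] at h0
  exact sub_nonneg.mp h0

lemma trace_proj_le_right {P : Mat4} (hP : P.PosSemidef) :
    (proj PsiM * P).trace ≤ P.trace := by
  have hpos : ((1 : Mat4) - proj PsiM).PosSemidef := by
    rw [one_sub_projPsiM]
    exact ((proj_psd _).add (proj_psd _)).add (proj_psd _)
  have h0 := trace_mul_nonneg hpos hP
  have : (((1 : Mat4) - proj PsiM) * P).trace = P.trace - (proj PsiM * P).trace := by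
    simp [Matrix.sub_mul]
  rw [this] at h0
  exact sub_nonneg.mp h0
/-- Tsirelson-type bound: for every γ ∈ (0,1] and every γ-admissible
triple, V/γ² ≤ 1/2 + 1/(2√2); equivalently S = 8(V/γ² − 1/2) ≤ 2√2. -/
theorem tsirelson_type_bound (γ : ℝ) (hγ : 0 < γ) (hγ' : γ ≤ 1)
    (P0 P1 Pe : Mat4) (h : Admissible γ P0 P1 Pe) :
    Gval P0 P1 / γ^2 ≤ 1/2 + 1/(2*Real.sqrt 2) ∧
    8 * (Gval P0 P1 / γ^2 - 1/2) ≤ 2*Real.sqrt 2 := by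
  obtain ⟨h0, h1, he, hsum, hc⟩ := h
  have hT1 : Matrix.trace (1 : Mat4) = (4:ℂ) := by
    simp [Matrix.trace_one]
  have htrPe : Pe.trace = 4 - 4*(γ:ℂ)^2 := by
    have hL : ∑ x : Bool × Bool, ∑ y : Bool × Bool, ((omg x ⊗ₖ tau y) * Pe).trace
        = (((4:ℂ) • (1:Mat4)) * Pe).trace := by
      rw [← sum_kron]
      simp [Finset.sum_mul, Matrix.trace_sum]
    rw [Matrix.smul_mul, Matrix.trace_smul, Matrix.one_mul] at hL
    simp only [hc, Finset.sum_const, Finset.card_univ] at hL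
    norm_num at hL
    linear_combination (-1 : ℂ) * hL
  have htrP01 : P0.trace + P1.trace = 4*(γ:ℂ)^2 := by
    have hP01 : P0 + P1 = 1 - Pe := by
      rw [← hsum]; abel
    have := congrArg Matrix.trace hP01
    rw [Matrix.trace_add, Matrix.trace_sub, hT1, htrPe] at this
    linear_combination this
  have halg : (rho false * P0 + rho true * P1) + (rho false * P0 + rho true * P1)
      = (rho false + rho true) * (P0 + P1) + (rho false - rho true) * (P0 - P1) := by
    noncomm_ring
  have htr : 2 * (rho false * P0 + rho true * P1).trace
      = ((rho false + rho true) * (P0 + P1)).trace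
        + ((rho false - rho true) * (P0 - P1)).trace := by
    have := congrArg Matrix.trace halg
    simp only [Matrix.trace_add] at this
    rw [Matrix.trace_add]
    linear_combination this
  have hS : ((rho false + rho true) * (P0 + P1)).trace = 2*(γ:ℂ)^2 := by
    rw [rho_add, Matrix.smul_mul, Matrix.one_mul, Matrix.trace_smul, Matrix.trace_add]
    rw [smul_eq_mul, htrP01]
    ring
  have hrsub : rho false - rho true = ((Real.sqrt 2 : ℂ)/4) • (proj PsiP - proj PsiM) := by
    rw [rho_sub, PXX_PYY, smul_smul, smul_smul]
    congr 1
    field_simp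
    linear_combination (-8:ℂ) * sqrt2_mul_self
  set t1 := (proj PsiP * P0).trace with ht1
  set t2 := (proj PsiM * P0).trace with ht2
  set t3 := (proj PsiP * P1).trace with ht3
  set t4 := (proj PsiM * P1).trace with ht4
  have hT : ((rho false - rho true) * (P0 - P1)).trace
      = ((Real.sqrt 2 : ℂ)/4) * (t1 - t2 - t3 + t4) := by
    rw [hrsub, Matrix.smul_mul, Matrix.trace_smul, smul_eq_mul]
    congr 1
    rw [Matrix.sub_mul, Matrix.mul_sub, Matrix.mul_sub, Matrix.trace_sub, Matrix.trace_sub,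
      Matrix.trace_sub]
    ring
  -- real part bounds
  have hre : ∀ {z w : ℂ}, z ≤ w → z.re ≤ w.re := fun hzw => (Complex.le_def.mp hzw).1
  have hb1 : t1.re ≤ P0.trace.re := hre (trace_proj_le_left h0)
  have hb4 : t4.re ≤ P1.trace.re := hre (trace_proj_le_right h1)
  have hb2 : 0 ≤ t2.re := by simpa using hre (trace_mul_nonneg (proj_psd PsiM) h0)
  have hb3 : 0 ≤ t3.re := by simpa using hre (trace_mul_nonneg (proj_psd PsiP) h1)
  have hsumre : P0.trace.re + P1.trace.re = 4*γ^2 := by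
    have := congrArg Complex.re htrP01
    simpa [← Complex.ofReal_pow] using this
  have hW : (t1 - t2 - t3 + t4).re ≤ 4*γ^2 := by
    simp only [Complex.add_re, Complex.sub_re]
    linarith
  have hTre : (((rho false - rho true) * (P0 - P1)).trace).re ≤ Real.sqrt 2 * γ^2 := by
    rw [hT]
    have : (((Real.sqrt 2 : ℂ)/4) * (t1 - t2 - t3 + t4)).re
        = (Real.sqrt 2 / 4) * (t1 - t2 - t3 + t4).re := by
      have : ((Real.sqrt 2 : ℂ)/4) = ((Real.sqrt 2 / 4 : ℝ) : ℂ) := by push_cast; ring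
      rw [this, Complex.re_ofReal_mul]
    rw [this]
    have h4 : (0:ℝ) ≤ Real.sqrt 2 / 4 := by positivity
    calc Real.sqrt 2 / 4 * (t1 - t2 - t3 + t4).re ≤ Real.sqrt 2 / 4 * (4*γ^2) :=
          mul_le_mul_of_nonneg_left hW h4
      _ = Real.sqrt 2 * γ^2 := by ring
  have hGeq : Gval P0 P1 = γ^2/2 + (((rho false - rho true) * (P0 - P1)).trace).re/4 := by
    have hc2 : (rho false * P0 + rho true * P1).trace
        = (γ:ℂ)^2 + ((rho false - rho true) * (P0 - P1)).trace / 2 := by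
      linear_combination (1/2 : ℂ) * htr + (1/2:ℂ) * hS
    rw [Gval, hc2]
    simp [Complex.add_re, Complex.div_re, ← Complex.ofReal_pow, Complex.ofReal_re]
    ring
  have hsq : Real.sqrt 2 * Real.sqrt 2 = 2 := Real.mul_self_sqrt (by norm_num)
  have hs2pos : (0:ℝ) < Real.sqrt 2 := Real.sqrt_pos.mpr (by norm_num)
  have hγ2 : (0:ℝ) < γ^2 := by positivity
  have hmain : Gval P0 P1 / γ^2 ≤ 1/2 + Real.sqrt 2/4 := by
    rw [div_le_iff₀ hγ2, hGeq]
    nlinarith [hTre]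
  have heq : (1:ℝ)/(2*Real.sqrt 2) = Real.sqrt 2/4 := by
    rw [div_eq_div_iff (by positivity) (by norm_num)]
    nlinarith [hsq]
  constructor
  · rw [heq]; exact hmain
  · nlinarith [hmain]
end
end
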